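/- Let λ₁, λ₂, μ₁, μ₂ > 0 with λ₂ < μ₂ and λ₁+λ₂ < μ₁+μ₂. Set x = λ₂/μ₂, y = (λ₁+λ₂)/(μ₁+μ₂), C = μ₁/(μ₁+μ₂), γ_s = λ₁/(λ₁+λ₂), and define π_{m,n} = C·x^m·y^n for m ≥ 1, π_{0,n} = y^n. Then for all m ≥ 1, ∑_{k=1}^{m} π_{m-k,k} · μ₁ · (1-γ_s)^k = C·μ₂·x^m. -/

import Mathlib

theorem stmt_4 (l1 l2 m1 m2 : ℝ) (hl1 : 0 < l1) (hl2 : 0 < l2) (hm1 : 0 < m1)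
    (hm2 : 0 < m2) (hstab2 : l2 < m2) (hstab1 : l1 + l2 < m1 + m2)
    (x y C γ : ℝ) (hx : x = l2 / m2) (hy : y = (l1 + l2) / (m1 + m2))
    (hC : C = m1 / (m1 + m2)) (hγ : γ = l1 / (l1 + l2))
    (π : ℕ → ℕ → ℝ)
    (hπ : ∀ m n : ℕ, π m n = if m = 0 then y ^ n else C * x ^ m * y ^ n) :
    ∀ m : ℕ, 1 ≤ m →
      ∑ k ∈ Finset.Icc 1 m, π (m - k) k * m1 * (1 - γ) ^ k = C * m2 * x ^ m := by
  intro m hm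
  have hs : (0:ℝ) < m1 + m2 := by linarith
  have hs' : m1 + m2 ≠ 0 := ne_of_gt hs
  have hl : (0:ℝ) < l1 + l2 := by linarith
  have hl' : l1 + l2 ≠ 0 := ne_of_gt hl
  set r : ℝ := m2 / (m1 + m2) with hr
  have hCr : C = 1 - r := by rw [hC, hr]; field_simp; ring
  have hrx : y * (1 - γ) = r * x := by
    rw [hy, hγ, hx, hr]; field_simp; ring
  have hr1 : r ≠ 1 := by
    intro h
    rw [hr, div_eq_one_iff_eq hs'] at h
    linarith
  have hstep : ∀ k ∈ Finset.Icc 1 m, π (m - k) k * m1 * (1 - γ) ^ k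
      = (if k = m then m1 * x ^ m * r ^ m else C * m1 * x ^ m * r ^ k) := by
    intro k hk
    simp only [Finset.mem_Icc] at hk
    rw [hπ]
    by_cases hkm : k = m
    · subst hkm
      rw [Nat.sub_self, if_pos rfl, if_pos rfl]
      have : y ^ k * m1 * (1 - γ) ^ k = m1 * (y * (1 - γ)) ^ k := by
        rw [mul_pow]; ring
      rw [this, hrx, mul_pow]; ring
    · have hne : m - k ≠ 0 := by omega
      rw [if_neg hkm, if_neg hne]
      have : C * x ^ (m - k) * y ^ k * m1 * (1 - γ) ^ k
          = C * m1 * x ^ (m - k) * (y * (1 - γ)) ^ k := by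
        rw [mul_pow]; ring
      rw [this, hrx, mul_pow]
      have hxk : x ^ (m - k) * x ^ k = x ^ m := by
        rw [← pow_add]; congr 1; omega
      calc C * m1 * x ^ (m - k) * (r ^ k * x ^ k)
          = C * m1 * (x ^ (m - k) * x ^ k) * r ^ k := by ring
        _ = C * m1 * x ^ m * r ^ k := by rw [hxk]
  rw [Finset.sum_congr rfl hstep]
  have hmem : m ∈ Finset.Icc 1 m := by simp [hm]
  rw [← Finset.sum_erase_add _ _ hmem, Finset.Icc_erase_right]
  rw [if_pos rfl]
  have herase : ∀ k ∈ Finset.Ico 1 m,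
      (if k = m then m1 * x ^ m * r ^ m else C * m1 * x ^ m * r ^ k)
        = C * m1 * x ^ m * r ^ k := by
    intro k hk
    simp only [Finset.mem_Ico] at hk
    rw [if_neg (by omega)]
  rw [Finset.sum_congr rfl herase, ← Finset.mul_sum,
    geom_sum_Ico hr1 hm]
  have hr1' : r - 1 ≠ 0 := sub_ne_zero.mpr hr1
  have hCm : C * m2 = m1 * r := by
    rw [hC, hr]; field_simp
  rw [hCm, hCr]
  field_simp
  ring
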